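/- The set Disgp[X] = ⌊X⁺⌋₁ ∪ ⌊XX⌋₂, with operations defined by: ⌊u⌋_p ⊢ ⌊v⌋_q = ⌊u⌋_p ⊣ ⌊v⌋_q = ⌊uv⌋₁ whenever |uv|>2, x ⊣ x' = ⌊xx'⌋₁ and x ⊢ x' = ⌊xx'⌋₂ for x,x' ∈ X, forms a commutative disemigroup, i.e. both operations are commutative and associative and the three dialgebra identities hold. -/

import Mathlib

namespace CDi

/-- A "diword": a basis element of the free commutative disemigroup `⌊X⁺⌋₁ ∪ ⌊XX⌋₂`:
a nonempty multiset (commutative word) together with a label `1`, or label `2`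
when the word has length `2`. -/
def DiWord (X : Type*) :=
  {p : Multiset X × ℕ // p.1 ≠ 0 ∧ (p.2 = 1 ∨ (p.2 = 2 ∧ Multiset.card p.1 = 2))}

namespace DiWord

variable {X : Type*}

def word (a : DiWord X) : Multiset X := a.1.1

def lbl (a : DiWord X) : ℕ := a.1.2

theorem word_ne (a : DiWord X) : a.word ≠ 0 := a.2.1

theorem add_word_ne (a b : DiWord X) : a.word + b.word ≠ 0 := by
  intro h
  have h1 := congrArg Multiset.card h
  simp only [Multiset.card_add, Multiset.card_zero] at h1
  have := a.word_ne
  rw [← Multiset.card_pos] at this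
  omega

/-- The operation `⊣` on `Disgp[X]`: always produces label 1. -/
def pd (a b : DiWord X) : DiWord X :=
  ⟨(a.word + b.word, 1), add_word_ne a b, Or.inl rfl⟩

/-- The operation `⊢` on `Disgp[X]`: produces label 2 exactly when both factors are
single letters (total length 2), label 1 otherwise. -/
def pv (a b : DiWord X) : DiWord X :=
  ⟨(a.word + b.word, if Multiset.card (a.word + b.word) = 2 then 2 else 1), by
    refine ⟨add_word_ne a b, ?_⟩
    split_ifs with h
    · exact Or.inr ⟨rfl, h⟩
    · exact Or.inl rfl⟩

/-- `⌊u⌋₁` for a nonempty commutative word `u`. -/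
def m1 (u : Multiset X) (h : u ≠ 0) : DiWord X := ⟨(u, 1), h, Or.inl rfl⟩

/-- A single letter `x ∈ X`, i.e. `⌊x⌋₁`. -/
def mX (x : X) : DiWord X := m1 {x} (by simp)

/-- `⌊xx'⌋₂`. -/
def m2 (x y : X) : DiWord X := ⟨({x, y}, 2), by simp, Or.inr ⟨rfl, by simp⟩⟩

end DiWord


/-- `Disgp[X] = ⌊X⁺⌋₁ ∪ ⌊XX⌋₂` with the operations `⊢` (`DiWord.pv`) and `⊣`
(`DiWord.pd`) forms a commutative disemigroup: both operations are commutative and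
associative and the three dialgebra identities hold. -/
theorem disgp_is_commutative_disemigroup (X : Type*) :
    (∀ a b : DiWord X, DiWord.pv a b = DiWord.pv b a) ∧
    (∀ a b : DiWord X, DiWord.pd a b = DiWord.pd b a) ∧
    (∀ a b c : DiWord X, DiWord.pv (DiWord.pv a b) c = DiWord.pv a (DiWord.pv b c)) ∧
    (∀ a b c : DiWord X, DiWord.pd (DiWord.pd a b) c = DiWord.pd a (DiWord.pd b c)) ∧
    (∀ a b c : DiWord X, DiWord.pd a (DiWord.pv b c) = DiWord.pd a (DiWord.pd b c)) ∧
    (∀ a b c : DiWord X, DiWord.pv (DiWord.pd a b) c = DiWord.pv (DiWord.pv a b) c) ∧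
    (∀ a b c : DiWord X, DiWord.pv a (DiWord.pd b c) = DiWord.pd (DiWord.pv a b) c) := by
  have cardpos : ∀ a : DiWord X, 0 < Multiset.card a.1.1 := fun a =>
    Multiset.card_pos.mpr a.word_ne
  have wpv : ∀ a b : DiWord X, (DiWord.pv a b).1.1
      = a.1.1 + b.1.1 := fun _ _ => rfl
  have wpd : ∀ a b : DiWord X, (DiWord.pd a b).1.1
      = a.1.1 + b.1.1 := fun _ _ => rfl
  refine ⟨?_, ?_, ?_, ?_, ?_, ?_, ?_⟩
  · intro a b
    apply Subtype.ext
    simp only [DiWord.pv, DiWord.word, add_comm]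
    rfl
  · intro a b
    apply Subtype.ext
    simp only [DiWord.pd, DiWord.word, add_comm]
  · intro a b c
    apply Subtype.ext
    have h1 := cardpos a; have h2 := cardpos b; have h3 := cardpos c
    simp only [DiWord.pv, DiWord.word, wpv, Multiset.card_add, add_assoc]
  · intro a b c
    apply Subtype.ext
    simp only [DiWord.pd, DiWord.word, wpd, add_assoc]
  · intro a b c
    apply Subtype.ext
    simp only [DiWord.pd, DiWord.word, wpv, wpd]
  · intro a b c
    apply Subtype.ext
    simp only [DiWord.pv, DiWord.word, wpv, wpd]
    rfl
  · intro a b c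
    apply Subtype.ext
    have h1 := cardpos a; have h2 := cardpos b; have h3 := cardpos c
    simp only [DiWord.pv, DiWord.pd, DiWord.word, wpv, wpd, Multiset.card_add, add_assoc]
    rw [if_neg (by omega)]

end CDi
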